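/- Let Ω ⊆ ℝ^d be a measurable set with finite positive Lebesgue measure, let μ, ρ, β > 0, and let K⁻¹ : Ω → (ℝ^d → ℝ^d) be a measurable field of linear maps satisfying K_m|y|² ≤ (K⁻¹(x)y)·y and |K⁻¹(x)y| ≤ K_M|y| for all x ∈ Ω and y ∈ ℝ^d, where 0 < K_m ≤ K_M. Define A(v)(x) = (μ/ρ)K⁻¹(x)v(x) + (β/ρ)|v(x)|v(x). Then there exists c_m > 0 such that for all v, w ∈ L³(Ω;ℝ^d), ∫_Ω (A(v) − A(w))·(v − w) dx ≥ (μ K_m/ρ) ‖v − w‖²_{L²(Ω)} + c_m ‖v − w‖³_{L³(Ω)} (note v − w ∈ L²(Ω;ℝ^d) since Ω has finite measure). -/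

import Mathlib

open MeasureTheory
open scoped ENNReal

lemma forch_mono {E : Type*} [NormedAddCommGroup E] [InnerProductSpace ℝ E] (a b : E) :
    (1/2) * ‖a - b‖^3 ≤ (inner ℝ (‖a‖ • a - ‖b‖ • b) (a - b) : ℝ) := by
  have hexp : (inner ℝ (‖a‖ • a - ‖b‖ • b) (a - b) : ℝ)
      = ‖a‖^3 + ‖b‖^3 - (‖a‖ + ‖b‖) * inner ℝ a b := by
    rw [inner_sub_left, inner_sub_right, inner_sub_right, real_inner_smul_left,
      real_inner_smul_left, real_inner_smul_left, real_inner_smul_left,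
      real_inner_self_eq_norm_sq, real_inner_self_eq_norm_sq,
      real_inner_comm b a]
    ring
  have hs : ‖a - b‖^2 = ‖a‖^2 + ‖b‖^2 - 2 * inner ℝ a b := by
    rw [@norm_sub_sq_real]; ring
  have ht : (inner ℝ a b : ℝ) ≤ ‖a‖ * ‖b‖ := real_inner_le_norm a b
  have htri : ‖a - b‖ ≤ ‖a‖ + ‖b‖ := norm_sub_le a b
  have h0 : (0:ℝ) ≤ ‖a - b‖ := norm_nonneg _
  have h1 : (0:ℝ) ≤ ‖a‖ := norm_nonneg _
  have h2 : (0:ℝ) ≤ ‖b‖ := norm_nonneg _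
  have hcube : ‖a - b‖^3 = (‖a‖^2 + ‖b‖^2 - 2 * inner ℝ a b) * ‖a - b‖ := by
    rw [← hs]; ring
  rw [hexp, hcube]
  nlinarith [mul_nonneg (sub_nonneg.2 htri) (sub_nonneg.2 ht),
    mul_nonneg (mul_nonneg (sub_nonneg.2 htri) (sub_nonneg.2 ht)) h0,
    mul_nonneg (sub_nonneg.2 htri) (sq_nonneg (‖a‖ - ‖b‖)),
    mul_nonneg (add_nonneg h1 h2) (sq_nonneg (‖a‖ - ‖b‖))]

lemma forch_lip {E : Type*} [NormedAddCommGroup E] [InnerProductSpace ℝ E] (a b : E) :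
    ‖‖a‖ • a - ‖b‖ • b‖ ≤ (‖a‖ + ‖b‖) * ‖a - b‖ := by
  have h : ‖a‖ • a - ‖b‖ • b = ‖a‖ • (a - b) + (‖a‖ - ‖b‖) • b := by module
  rw [h]
  calc ‖‖a‖ • (a - b) + (‖a‖ - ‖b‖) • b‖
      ≤ ‖‖a‖ • (a - b)‖ + ‖(‖a‖ - ‖b‖) • b‖ := norm_add_le _ _
    _ = ‖a‖ * ‖a - b‖ + |‖a‖ - ‖b‖| * ‖b‖ := by
        rw [norm_smul, norm_smul, Real.norm_eq_abs, Real.norm_eq_abs,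
          abs_of_nonneg (norm_nonneg a)]
    _ ≤ (‖a‖ + ‖b‖) * ‖a - b‖ := by
        have := abs_norm_sub_norm_le a b
        nlinarith [norm_nonneg b, norm_nonneg (a - b)]

lemma integrable_norm_pow_of_mem {α : Type*} [MeasurableSpace α] {ν : Measure α} {E : Type*}
    [NormedAddCommGroup E] (n : ℕ) (hn : n ≠ 0)
    (f : α → E) (hf : MemLp f n ν) : Integrable (fun x => ‖f x‖ ^ n) ν := by
  have h := hf.integrable_norm_rpow (by exact_mod_cast hn) (by simp)
  refine h.congr (Filter.Eventually.of_forall fun x => ?_)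
  simp [Real.rpow_natCast]

/-- Strict monotonicity of the full Darcy–Forchheimer operator
`A(v) = (μ/ρ) K⁻¹ v + (β/ρ) |v| v`, combining both parts of Property 2.1. -/
theorem stmt_3 (d : ℕ) (Ω : Set (EuclideanSpace ℝ (Fin d)))
    (hΩ : MeasurableSet Ω) (hΩpos : 0 < volume Ω) (hΩfin : volume Ω < ⊤)
    (μ ρ β Km KM : ℝ) (hμ : 0 < μ) (hρ : 0 < ρ) (hβ : 0 < β)
    (hKm : 0 < Km) (hKmM : Km ≤ KM)
    (Kinv : EuclideanSpace ℝ (Fin d) → EuclideanSpace ℝ (Fin d) →ₗ[ℝ] EuclideanSpace ℝ (Fin d))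
    (hKmeas : ∀ y, Measurable fun x => Kinv x y)
    (hKlow : ∀ x ∈ Ω, ∀ y, Km * ‖y‖ ^ 2 ≤ (inner ℝ (Kinv x y) y : ℝ))
    (hKup : ∀ x ∈ Ω, ∀ y, ‖Kinv x y‖ ≤ KM * ‖y‖)
    (A : (EuclideanSpace ℝ (Fin d) → EuclideanSpace ℝ (Fin d)) →
          EuclideanSpace ℝ (Fin d) → EuclideanSpace ℝ (Fin d))
    (hA : ∀ v x, A v x = (μ / ρ) • Kinv x (v x) + (β / ρ) • (‖v x‖ • v x)) :
    ∃ cm : ℝ, 0 < cm ∧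
      ∀ v w : EuclideanSpace ℝ (Fin d) → EuclideanSpace ℝ (Fin d),
        MemLp v 3 (volume.restrict Ω) → MemLp w 3 (volume.restrict Ω) →
        μ * Km / ρ * ∫ x in Ω, ‖v x - w x‖ ^ 2 + cm * ∫ x in Ω, ‖v x - w x‖ ^ 3 ≤
          ∫ x in Ω, (inner ℝ (A v x - A w x) (v x - w x) : ℝ) := by
  have hT : 0 < (volume Ω).toReal := ENNReal.toReal_pos hΩpos.ne' hΩfin.ne
  refine ⟨β / (2 * μ * Km * (volume Ω).toReal),
    div_pos hβ (by positivity), ?_⟩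
  intro v w hv hw
  haveI : IsFiniteMeasure (volume.restrict Ω) :=
    ⟨by rw [Measure.restrict_apply_univ]; exact hΩfin⟩
  have hu3 : MemLp (v - w) 3 (volume.restrict Ω) := hv.sub hw
  have hu2 : MemLp (v - w) 2 (volume.restrict Ω) := hu3.mono_exponent (by norm_num)
  have hi2 : Integrable (fun x => ‖v x - w x‖ ^ 2) (volume.restrict Ω) := by
    simpa using integrable_norm_pow_of_mem 2 (by norm_num) _ hu2
  have hi3 : Integrable (fun x => ‖v x - w x‖ ^ 3) (volume.restrict Ω) := by
    simpa using integrable_norm_pow_of_mem 3 (by norm_num) _ hu3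
  have hiv3 : Integrable (fun x => ‖v x‖ ^ 3) (volume.restrict Ω) :=
    integrable_norm_pow_of_mem 3 (by norm_num) _ hv
  have hiw3 : Integrable (fun x => ‖w x‖ ^ 3) (volume.restrict Ω) :=
    integrable_norm_pow_of_mem 3 (by norm_num) _ hw
  have hvm : AEStronglyMeasurable v (volume.restrict Ω) := hv.aestronglyMeasurable
  have hwm : AEStronglyMeasurable w (volume.restrict Ω) := hw.aestronglyMeasurable
  have hum : AEStronglyMeasurable (fun x => v x - w x) (volume.restrict Ω) := hvm.sub hwm
  -- measurability of x ↦ Kinv x (v x - w x)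
  have hKu : AEStronglyMeasurable (fun x => Kinv x (v x - w x)) (volume.restrict Ω) := by
    have key : (fun x => Kinv x (v x - w x)) =
        fun x => ∑ i, ((EuclideanSpace.basisFun (Fin d) ℝ).repr (v x - w x) i) •
          Kinv x ((EuclideanSpace.basisFun (Fin d) ℝ) i) := by
      funext x
      conv_lhs => rw [← (EuclideanSpace.basisFun (Fin d) ℝ).sum_repr (v x - w x)]
      rw [map_sum]
      exact Finset.sum_congr rfl fun i _ => LinearMap.map_smul _ _ _
    rw [key]
    refine Finset.aestronglyMeasurable_fun_sum _ fun i _ => ?_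
    have hc : AEStronglyMeasurable
        (fun x => (EuclideanSpace.basisFun (Fin d) ℝ).repr (v x - w x) i) (volume.restrict Ω) := by
      have hcont : Continuous fun y : EuclideanSpace ℝ (Fin d) =>
          (EuclideanSpace.basisFun (Fin d) ℝ).repr y i := by
        simp only [EuclideanSpace.basisFun_repr]
        exact (EuclideanSpace.proj i : EuclideanSpace ℝ (Fin d) →L[ℝ] ℝ).continuous
      exact hcont.comp_aestronglyMeasurable hum
    exact hc.smul ((hKmeas _).aestronglyMeasurable)
  -- decomposition of A v - A w
  have hAdec : ∀ x, A v x - A w x =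
      (μ / ρ) • Kinv x (v x - w x) + (β / ρ) • (‖v x‖ • v x - ‖w x‖ • w x) := by
    intro x
    rw [hA, hA, map_sub]
    module
  have hgm : AEStronglyMeasurable
      (fun x => (inner ℝ (A v x - A w x) (v x - w x) : ℝ)) (volume.restrict Ω) := by
    have heq : (fun x => (inner ℝ (A v x - A w x) (v x - w x) : ℝ)) =
        fun x => (inner ℝ ((μ / ρ) • Kinv x (v x - w x) +
          (β / ρ) • (‖v x‖ • v x - ‖w x‖ • w x)) (v x - w x) : ℝ) := by
      funext x; rw [hAdec x]
    rw [heq]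
    have hv' : AEStronglyMeasurable (fun x => ‖v x‖ • v x) (volume.restrict Ω) :=
      hvm.norm.smul hvm
    have hw' : AEStronglyMeasurable (fun x => ‖w x‖ • w x) (volume.restrict Ω) :=
      hwm.norm.smul hwm
    have hvw : AEStronglyMeasurable (fun x => (μ / ρ) • Kinv x (v x - w x) +
        (β / ρ) • (‖v x‖ • v x - ‖w x‖ • w x)) (volume.restrict Ω) :=
      (hKu.const_smul (μ / ρ)).add ((hv'.sub hw').const_smul (β / ρ))
    exact AEStronglyMeasurable.inner (𝕜 := ℝ) hvw hum
  -- dominating function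
  have hdom : Integrable (fun x => (μ / ρ) * KM * ‖v x - w x‖ ^ 2 +
      (β / ρ) * (4 * ‖v x‖ ^ 3 + 4 * ‖w x‖ ^ 3 + ‖v x - w x‖ ^ 3)) (volume.restrict Ω) :=
    (hi2.const_mul _).add
      ((((hiv3.const_mul 4).add (hiw3.const_mul 4)).add hi3).const_mul _)
  have hgint : Integrable
      (fun x => (inner ℝ (A v x - A w x) (v x - w x) : ℝ)) (volume.restrict Ω) := by
    refine hdom.mono' hgm ?_
    filter_upwards [ae_restrict_mem hΩ] with x hx
    have hb1 : ‖A v x - A w x‖ ≤ (μ / ρ) * (KM * ‖v x - w x‖) +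
        (β / ρ) * ((‖v x‖ + ‖w x‖) * ‖v x - w x‖) := by
      rw [hAdec x]
      calc ‖(μ / ρ) • Kinv x (v x - w x) + (β / ρ) • (‖v x‖ • v x - ‖w x‖ • w x)‖
          ≤ ‖(μ / ρ) • Kinv x (v x - w x)‖ + ‖(β / ρ) • (‖v x‖ • v x - ‖w x‖ • w x)‖ :=
            norm_add_le _ _
        _ = (μ / ρ) * ‖Kinv x (v x - w x)‖ + (β / ρ) * ‖‖v x‖ • v x - ‖w x‖ • w x‖ := by
            rw [norm_smul, norm_smul, Real.norm_eq_abs, Real.norm_eq_abs,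
              abs_of_pos (by positivity), abs_of_pos (by positivity)]
        _ ≤ _ := by
            gcongr
            · exact hKup x hx _
            · exact forch_lip _ _
    have hb2 : ‖(inner ℝ (A v x - A w x) (v x - w x) : ℝ)‖ ≤ ‖A v x - A w x‖ * ‖v x - w x‖ :=
      norm_inner_le_norm _ _
    have htri : ‖v x - w x‖ ≤ ‖v x‖ + ‖w x‖ := norm_sub_le _ _
    have h1 : (0:ℝ) ≤ ‖v x‖ := norm_nonneg _
    have h2 : (0:ℝ) ≤ ‖w x‖ := norm_nonneg _
    have h3 : (0:ℝ) ≤ ‖v x - w x‖ := norm_nonneg _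
    have hKM : 0 < KM := lt_of_lt_of_le hKm hKmM
    have hmul : ‖A v x - A w x‖ * ‖v x - w x‖ ≤
        ((μ / ρ) * (KM * ‖v x - w x‖) +
          (β / ρ) * ((‖v x‖ + ‖w x‖) * ‖v x - w x‖)) * ‖v x - w x‖ := by
      exact mul_le_mul_of_nonneg_right hb1 h3
    have hβρ : (0:ℝ) < β / ρ := by positivity
    have key : (‖v x‖ + ‖w x‖) * ‖v x - w x‖ ^ 2 ≤
        4 * ‖v x‖ ^ 3 + 4 * ‖w x‖ ^ 3 + ‖v x - w x‖ ^ 3 := by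
      nlinarith [mul_le_mul_of_nonneg_left (pow_le_pow_left₀ h3 htri 2) (add_nonneg h1 h2),
        mul_nonneg (add_nonneg h1 h2) (sq_nonneg (‖v x‖ - ‖w x‖))]
    calc ‖(inner ℝ (A v x - A w x) (v x - w x) : ℝ)‖
        ≤ ((μ / ρ) * (KM * ‖v x - w x‖) +
            (β / ρ) * ((‖v x‖ + ‖w x‖) * ‖v x - w x‖)) * ‖v x - w x‖ := hb2.trans hmul
      _ ≤ (μ / ρ) * KM * ‖v x - w x‖ ^ 2 +
          (β / ρ) * (4 * ‖v x‖ ^ 3 + 4 * ‖w x‖ ^ 3 + ‖v x - w x‖ ^ 3) := by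
          nlinarith [mul_le_mul_of_nonneg_left key hβρ.le]
  -- pointwise lower bound
  have hlow : ∀ᵐ x ∂(volume.restrict Ω),
      μ * Km / ρ * ‖v x - w x‖ ^ 2 + β / (2 * ρ) * ‖v x - w x‖ ^ 3 ≤
        (inner ℝ (A v x - A w x) (v x - w x) : ℝ) := by
    filter_upwards [ae_restrict_mem hΩ] with x hx
    have hgx : (inner ℝ (A v x - A w x) (v x - w x) : ℝ) =
        (μ / ρ) * (inner ℝ (Kinv x (v x - w x)) (v x - w x) : ℝ) +
        (β / ρ) * (inner ℝ (‖v x‖ • v x - ‖w x‖ • w x) (v x - w x) : ℝ) := by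
      rw [hAdec x, inner_add_left, real_inner_smul_left, real_inner_smul_left]
    rw [hgx]
    have h1 := hKlow x hx (v x - w x)
    have h2 := forch_mono (v x) (w x)
    have hμρ : (0:ℝ) < μ / ρ := by positivity
    have hβρ : (0:ℝ) < β / ρ := by positivity
    have e1 := mul_le_mul_of_nonneg_left h1 hμρ.le
    have e2 := mul_le_mul_of_nonneg_left h2 hβρ.le
    have r1 : μ * Km / ρ * ‖v x - w x‖ ^ 2 = (μ / ρ) * (Km * ‖v x - w x‖ ^ 2) := by ring
    have r2 : β / (2 * ρ) * ‖v x - w x‖ ^ 3 = (β / ρ) * ((1/2) * ‖v x - w x‖ ^ 3) := by ring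
    rw [r1, r2]
    linarith
  -- integral comparison
  have hfint : Integrable (fun x => μ * Km / ρ * ‖v x - w x‖ ^ 2 +
      β / (2 * ρ) * ‖v x - w x‖ ^ 3) (volume.restrict Ω) :=
    (hi2.const_mul _).add (hi3.const_mul _)
  have hmono : (μ * Km / ρ * ∫ x in Ω, ‖v x - w x‖ ^ 2) +
      β / (2 * ρ) * ∫ x in Ω, ‖v x - w x‖ ^ 3 ≤
      ∫ x in Ω, (inner ℝ (A v x - A w x) (v x - w x) : ℝ) := by
    have h := integral_mono_ae hfint hgint hlow
    rwa [integral_add (hi2.const_mul _) (hi3.const_mul _),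
      integral_const_mul, integral_const_mul] at h
  -- rewrite the LHS of the goal
  have hconst : (∫ x in Ω, (‖v x - w x‖ ^ 2 +
      (β / (2 * μ * Km * (volume Ω).toReal)) * ∫ y in Ω, ‖v y - w y‖ ^ 3)) =
      (∫ x in Ω, ‖v x - w x‖ ^ 2) + (volume Ω).toReal *
        ((β / (2 * μ * Km * (volume Ω).toReal)) * ∫ y in Ω, ‖v y - w y‖ ^ 3) := by
    rw [integral_add hi2 (integrable_const _), integral_const, measureReal_restrict_apply_univ,
      measureReal_def, smul_eq_mul]
  calc μ * Km / ρ * ∫ x in Ω, (‖v x - w x‖ ^ 2 +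
        (β / (2 * μ * Km * (volume Ω).toReal)) * ∫ y in Ω, ‖v y - w y‖ ^ 3)
      = (μ * Km / ρ * ∫ x in Ω, ‖v x - w x‖ ^ 2) +
        β / (2 * ρ) * ∫ x in Ω, ‖v x - w x‖ ^ 3 := by
        rw [hconst]
        have hTne : (volume Ω).toReal ≠ 0 := hT.ne'
        have hc : μ * Km / ρ * ((volume Ω).toReal * (β / (2 * μ * Km * (volume Ω).toReal)))
            = β / (2 * ρ) := by
          field_simp
        calc μ * Km / ρ * ((∫ x in Ω, ‖v x - w x‖ ^ 2) +
              (volume Ω).toReal * ((β / (2 * μ * Km * (volume Ω).toReal)) *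
                ∫ y in Ω, ‖v y - w y‖ ^ 3))
            = (μ * Km / ρ * ∫ x in Ω, ‖v x - w x‖ ^ 2) +
              (μ * Km / ρ * ((volume Ω).toReal * (β / (2 * μ * Km * (volume Ω).toReal)))) *
                ∫ y in Ω, ‖v y - w y‖ ^ 3 := by ring
          _ = _ := by rw [hc]
    _ ≤ ∫ x in Ω, (inner ℝ (A v x - A w x) (v x - w x) : ℝ) := hmono
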